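/- Let n be odd, l = ⌊n/2⌋, 0 ≤ i ≤ l−1, and ω_i = 1/(4(l−i)(n−l+i)). For any A ⊆ [n] with |A| = l−i, the vector x* = ((n−|A|) 1_A + |A| 1_{A^c}) / sqrt(n|A|(n−|A|)) is an eigenvector of T_{ω_i} with eigenvalue λ* = sqrt(n/(|A|(n−|A|))), and the vector v = 1_A − 1_{A^c} is orthogonal to x* and satisfies v^T H(x*) v = 0, where H(x*) = 2 T_{ω_i}(I,I,x*) − λ* I; hence the projected Hessian H_p(x*) is rank deficient and (x*, λ*) is not Newton-stable. -/

import Mathlib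

open scoped RealInnerProductSpace
open Finset Matrix

noncomputable section

/-- Interpret a plain function as a vector of `EuclideanSpace ℝ (Fin n)`. -/
def toE {n : ℕ} (v : Fin n → ℝ) : EuclideanSpace ℝ (Fin n) :=
  (WithLp.equiv 2 (Fin n → ℝ)).symm v

/-- `T_ω(I,x,x)` for the cubic tensor `T_ω = Σᵢ eᵢ⊗eᵢ⊗eᵢ + ω(𝟙⊗𝟙⊗𝟙)` on `ℝⁿ`:
its `i`-th coordinate is `xᵢ² + ω (Σₖ xₖ)²`. -/
def twvec (n : ℕ) (ω : ℝ) (x : EuclideanSpace ℝ (Fin n)) : EuclideanSpace ℝ (Fin n) :=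
  toE fun i => x i ^ 2 + ω * (∑ k, x k) ^ 2

/-- `T_ω(I,I,x) = diag(x) + ω (Σₖ xₖ) 𝟙𝟙ᵀ`. -/
def twmat (n : ℕ) (ω : ℝ) (x : EuclideanSpace ℝ (Fin n)) : Matrix (Fin n) (Fin n) ℝ :=
  Matrix.of fun i j => (if i = j then x i else 0) + ω * (∑ k, x k)

lemma sum_ite_card {n : ℕ} (A : Finset (Fin n)) (p q : ℝ) :
    ∑ j : Fin n, (if j ∈ A then p else q) = A.card * p + ((n:ℝ) - A.card) * q := by
  classical
  rw [Finset.sum_ite]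
  have h1 : Finset.univ.filter (· ∈ A) = A := by simp
  have h2 : Finset.univ.filter (fun j => ¬ j ∈ A) = Aᶜ := by ext j; simp
  have hc : A.card ≤ n := by simpa using A.card_le_univ
  rw [h1, h2, Finset.sum_const, Finset.sum_const, Finset.card_compl,
    Fintype.card_fin, nsmul_eq_mul, nsmul_eq_mul]
  push_cast [hc]
  ring

lemma sum_fn_card {n : ℕ} (A : Finset (Fin n)) (f : Fin n → ℝ) (p q : ℝ)
    (h : ∀ j, f j = if j ∈ A then p else q) :
    ∑ j : Fin n, f j = A.card * p + ((n:ℝ) - A.card) * q := by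
  rw [Finset.sum_congr rfl fun j _ => h j, sum_ite_card]

set_option maxHeartbeats 2000000

/-- for `n` odd, `l = ⌊n/2⌋`, `0 ≤ i < l`, `ωᵢ = 1/(4(l−i)(n−l+i))` and
`A ⊆ [n]` with `|A| = l−i`, the vector
`x* = ((n−|A|) 1_A + |A| 1_{Aᶜ}) / √(n|A|(n−|A|))` is a unit eigenvector of `T_{ωᵢ}`
with eigenvalue `λ* = √(n/(|A|(n−|A|)))`; the vector `v = 1_A − 1_{Aᶜ}` is orthogonal
to `x*` and satisfies `vᵀ H(x*) v = 0` for `H(x*) = 2 T_{ωᵢ}(I,I,x*) − λ* I`; hence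
the projected Hessian `H_p(x*) = Uᵀ H(x*) U` is rank deficient, i.e. `(x*, λ*)` is
not Newton-stable. -/
theorem stmt_18 {n : ℕ} (hn : Odd n) (i : ℕ) (hi : i < n / 2)
    (A : Finset (Fin n)) (hA : A.card = n / 2 - i) :
    ‖toE fun j => (if j ∈ A then (n : ℝ) - A.card else (A.card : ℝ)) /
        Real.sqrt ((n : ℝ) * A.card * ((n : ℝ) - A.card))‖ = 1 ∧
    twvec n (1 / (4 * (((n / 2 : ℕ) : ℝ) - i) * ((n : ℝ) - ((n / 2 : ℕ) : ℝ) + i)))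
        (toE fun j => (if j ∈ A then (n : ℝ) - A.card else (A.card : ℝ)) /
          Real.sqrt ((n : ℝ) * A.card * ((n : ℝ) - A.card))) =
      Real.sqrt ((n : ℝ) / ((A.card : ℝ) * ((n : ℝ) - A.card))) •
        (toE fun j => (if j ∈ A then (n : ℝ) - A.card else (A.card : ℝ)) /
          Real.sqrt ((n : ℝ) * A.card * ((n : ℝ) - A.card))) ∧
    ⟪toE fun j => (if j ∈ A then (1 : ℝ) else -1),
        toE fun j => (if j ∈ A then (n : ℝ) - A.card else (A.card : ℝ)) /
          Real.sqrt ((n : ℝ) * A.card * ((n : ℝ) - A.card))⟫ = 0 ∧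
    (fun j => (if j ∈ A then (1 : ℝ) else -1)) ⬝ᵥ
      (((2 : ℝ) • twmat n
            (1 / (4 * (((n / 2 : ℕ) : ℝ) - i) * ((n : ℝ) - ((n / 2 : ℕ) : ℝ) + i)))
            (toE fun j => (if j ∈ A then (n : ℝ) - A.card else (A.card : ℝ)) /
              Real.sqrt ((n : ℝ) * A.card * ((n : ℝ) - A.card))) -
          Real.sqrt ((n : ℝ) / ((A.card : ℝ) * ((n : ℝ) - A.card))) •
            (1 : Matrix (Fin n) (Fin n) ℝ)).mulVec
        fun j => (if j ∈ A then (1 : ℝ) else -1)) = 0 ∧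
    ∀ U : Matrix (Fin n) (Fin (n - 1)) ℝ, Uᵀ * U = 1 →
      U * Uᵀ = 1 - Matrix.vecMulVec
        (fun j => (if j ∈ A then ((n : ℝ) - A.card) else (A.card : ℝ)) /
          Real.sqrt ((n : ℝ) * A.card * ((n : ℝ) - A.card)))
        (fun j => (if j ∈ A then ((n : ℝ) - A.card) else (A.card : ℝ)) /
          Real.sqrt ((n : ℝ) * A.card * ((n : ℝ) - A.card))) →
      ¬ IsUnit (Uᵀ *
          (((2 : ℝ) • twmat n
              (1 / (4 * (((n / 2 : ℕ) : ℝ) - i) * ((n : ℝ) - ((n / 2 : ℕ) : ℝ) + i)))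
              (toE fun j => (if j ∈ A then (n : ℝ) - A.card else (A.card : ℝ)) /
                Real.sqrt ((n : ℝ) * A.card * ((n : ℝ) - A.card))) -
            Real.sqrt ((n : ℝ) / ((A.card : ℝ) * ((n : ℝ) - A.card))) •
              (1 : Matrix (Fin n) (Fin n) ℝ))) * U) := by

  classical
  have hn3 : 3 ≤ n := by rcases hn with ⟨m, hm⟩; omega
  have hile : i ≤ n / 2 := le_of_lt hi
  have hc1 : 1 ≤ A.card := by omega
  have hcn : A.card < n := by omega
  set a : ℝ := (A.card : ℝ) with ha_def
  have haR : ((n / 2 : ℕ) : ℝ) - (i : ℝ) = a := by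
    rw [ha_def, hA]; push_cast [hile]; ring
  set b : ℝ := (n : ℝ) - a with hb_def
  have hbR : (n : ℝ) - ((n / 2 : ℕ) : ℝ) + (i : ℝ) = b := by rw [hb_def, ← haR]; ring
  have ha0 : (0:ℝ) < a := by
    rw [ha_def]; exact_mod_cast Nat.lt_of_lt_of_le Nat.zero_lt_one hc1
  have hb0 : (0:ℝ) < b := by
    have : (A.card : ℝ) < n := by exact_mod_cast hcn
    rw [hb_def]; linarith
  have hn0 : (0:ℝ) < n := by positivity
  have hab : a + b = n := by rw [hb_def]; ring
  set s : ℝ := Real.sqrt ((n : ℝ) * a * b) with hs_def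
  have hs0 : (0:ℝ) < s := Real.sqrt_pos.mpr (by positivity)
  have hs2 : s ^ 2 = (n:ℝ) * a * b := Real.sq_sqrt (by positivity)
  have hlam : Real.sqrt ((n : ℝ) / (a * b)) = n / s := by
    rw [show (n:ℝ)/(a*b) = (n/s)^2 by rw [div_pow, hs2]; field_simp,
      Real.sqrt_sq (by positivity)]
  have hω : 1 / (4 * (((n / 2 : ℕ) : ℝ) - i) * ((n : ℝ) - ((n / 2 : ℕ) : ℝ) + i))
      = 1 / (4 * a * b) := by rw [haR, hbR]
  rw [hω, hlam]
  have hbb : ((n:ℝ) - a) = b := rfl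
  -- key sums
  have hSx : ∑ k : Fin n, ((if k ∈ A then b else a) / s) = 2 * a * b / s := by
    rw [sum_fn_card A _ (b/s) (a/s) (fun j => by split_ifs <;> ring), ← ha_def, hbb]
    field_simp; ring
  have hSv : ∑ k : Fin n, (if k ∈ A then (1:ℝ) else -1) = a - b := by
    rw [sum_fn_card A _ 1 (-1) (fun j => rfl), ← ha_def, hbb]; ring
  -- the Hessian kills v
  have hHv : ((2:ℝ) • twmat n (1/(4*a*b)) (toE fun j => (if j ∈ A then b else a)/s) -
      ((n:ℝ)/s) • (1 : Matrix (Fin n) (Fin n) ℝ)) *ᵥ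
        (fun j => if j ∈ A then (1:ℝ) else -1) = 0 := by
    funext j
    simp only [Matrix.mulVec, dotProduct, Matrix.sub_apply, Matrix.smul_apply,
      Matrix.one_apply, twmat, Matrix.of_apply, smul_eq_mul, Pi.zero_apply, toE,
      WithLp.equiv_symm_apply, PiLp.toLp_apply, Pi.sub_apply]
    rw [hSx]
    have hterm : ∀ k : Fin n,
        (2 * ((if j = k then (if j ∈ A then b else a) / s else 0) + 1/(4*a*b) * (2 * a * b / s))
          - (n:ℝ)/s * if j = k then 1 else 0) * (if k ∈ A then (1:ℝ) else -1)
        = (if j = k then (2 * ((if j ∈ A then b else a)/s) - (n:ℝ)/s) *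
            (if k ∈ A then (1:ℝ) else -1) else 0)
          + (2 * (1/(4*a*b) * (2 * a * b / s))) * (if k ∈ A then (1:ℝ) else -1) := by
      intro k; split_ifs <;> ring
    rw [Finset.sum_congr rfl fun k _ => hterm k, Finset.sum_add_distrib,
      Finset.sum_ite_eq, ← Finset.mul_sum, hSv]
    simp only [Finset.mem_univ, if_true]
    split_ifs with hj
    · field_simp
      linear_combination (2 * b + a - b - n) * s * hab
    · field_simp
      linear_combination 0 * hab
  refine ⟨?_, ?_, ?_, ?_, ?_⟩
  · -- norm = 1
    rw [EuclideanSpace.norm_eq]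
    have h1 : ∀ j : Fin n, ‖(toE fun j => (if j ∈ A then b else a)/s) j‖ ^ 2
        = if j ∈ A then b^2/s^2 else a^2/s^2 := by
      intro j
      simp only [toE, WithLp.equiv_symm_apply, PiLp.toLp_apply]
      split_ifs <;> rw [Real.norm_eq_abs, sq_abs, div_pow]
    rw [Finset.sum_congr rfl fun j _ => h1 j, sum_ite_card, ← ha_def, hbb]
    rw [show a * (b^2/s^2) + b * (a^2/s^2) = 1 by
      rw [hs2]; field_simp; ring]
    exact Real.sqrt_one
  · -- eigenvector equation
    ext j
    show ((if j ∈ A then b else a)/s)^2 + 1/(4*a*b) * (∑ k : Fin n, ((if k ∈ A then b else a)/s))^2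
        = ((n:ℝ)/s) * ((if j ∈ A then b else a)/s)
    rw [hSx]
    have hs2' : s ^ 2 = (n:ℝ) * a * ((n:ℝ) - a) := hs2
    split_ifs with hj
    · field_simp
      linear_combination (4*a*b^2*s^4) * hab
    · field_simp
      linear_combination (4*a^2*b*s^4) * hab
  · -- orthogonality
    rw [PiLp.inner_apply]
    simp only [toE, WithLp.equiv_symm_apply, PiLp.toLp_apply, RCLike.inner_apply, conj_trivial]
    rw [sum_fn_card A _ (b/s) (-(a/s)) (fun j => by split_ifs <;> ring), ← ha_def, hbb]
    field_simp
    ring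
  · -- vᵀ H v = 0
    rw [hHv]
    simp
  · -- projected Hessian is singular
    intro U hU1 hU2 hUnit
    set v : Fin n → ℝ := fun j => if j ∈ A then (1:ℝ) else -1 with hv_def
    set x : Fin n → ℝ := fun j => (if j ∈ A then b else a)/s with hx_def
    set H : Matrix (Fin n) (Fin n) ℝ :=
      (2:ℝ) • twmat n (1/(4*a*b)) (toE x) - ((n:ℝ)/s) • 1 with hH_def
    have hxv : (vecMulVec x x) *ᵥ v = 0 := by
      funext j'
      simp only [Matrix.mulVec, dotProduct, Matrix.vecMulVec_apply, Pi.zero_apply,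
        mul_assoc]
      rw [← Finset.mul_sum]
      have : ∑ k : Fin n, x k * v k = 0 := by
        rw [sum_fn_card A _ (b/s) (-(a/s))
            (fun j => by simp only [hx_def, hv_def]; split_ifs <;> ring),
          ← ha_def, hbb]
        field_simp
        ring
      rw [this, mul_zero]
    have hPv : (U * Uᵀ) *ᵥ v = v := by
      rw [hU2, Matrix.sub_mulVec, Matrix.one_mulVec, hxv]
      simp
    have hM0 : (Uᵀ * H * U) *ᵥ (Uᵀ *ᵥ v) = 0 := by
      rw [Matrix.mulVec_mulVec, Matrix.mul_assoc, Matrix.mul_assoc,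
        ← Matrix.mulVec_mulVec, ← Matrix.mulVec_mulVec, hPv, hHv]
      simp
    obtain ⟨B, hB⟩ : ∃ B : Matrix (Fin (n-1)) (Fin (n-1)) ℝ, B * (Uᵀ * H * U) = 1 :=
      ⟨(Uᵀ * H * U)⁻¹, Matrix.nonsing_inv_mul _ ((Matrix.isUnit_iff_isUnit_det _).mp hUnit)⟩
    have hw0 : Uᵀ *ᵥ v = 0 := by
      have := congrArg (fun M => M *ᵥ (Uᵀ *ᵥ v)) hB
      simpa [← Matrix.mulVec_mulVec, hM0, Matrix.one_mulVec] using this.symm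
    have hv0 : v = 0 := by
      rw [← hPv, ← Matrix.mulVec_mulVec, hw0]
      simp
    have := congrFun hv0 ⟨0, by omega⟩
    simp only [hv_def, Pi.zero_apply] at this
    split_ifs at this <;> norm_num at this
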